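/- arXiv:2101.05663 — 2 statements merged into one kernel-verified Lean document; each statement's English description precedes it below -/
import Mathlib

section
/- Let p be a prime and a ≥ 1 an integer. For any integer x coprime to p, the sum of χ(x) over all Dirichlet characters χ modulo p^a whose conductor is exactly p^a equals: 0 if ν_p(x-1) < a-1; ⌊p^(a-2)⌋ - p^(a-1) if ν_p(x-1) = a-1; and ⌊p^(a-2)⌋ - 2p^(a-1) + p^a if ν_p(x-1) ≥ a. (Here ⌊p^(a-2)⌋ means p^(a-2) if a ≥ 2 and 0 if a = 1, and ν_p denotes the p-adic valuation.) -/
open Finset DirichletCharacter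

lemma sum_chars_aux (p : ℕ) (hp : p.Prime) (b : ℕ) (x : ℤ) :
    (∑ χ : DirichletCharacter ℂ (p ^ b), χ (x : ZMod (p ^ b)))
      = if (p : ℤ) ^ b ∣ (x - 1) then ((p ^ b).totient : ℂ) else 0 := by
  haveI : NeZero (p ^ b) := ⟨pow_ne_zero _ hp.pos.ne'⟩
  rw [DirichletCharacter.sum_characters_eq]
  have : ((x : ZMod (p ^ b)) = 1) ↔ (p : ℤ) ^ b ∣ (x - 1) := by
    rw [← sub_eq_zero, show ((x : ZMod (p ^ b)) - 1) = (((x - 1 : ℤ)) : ZMod (p ^ b)) by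
      push_cast; ring, ZMod.intCast_zmod_eq_zero_iff_dvd]
    push_cast
    rfl
  simp only [this]

/-- Let `p` be a prime and `a ≥ 1`. For any integer `x` coprime to `p`,
the sum of `χ(x)` over all Dirichlet characters `χ` modulo `p^a` with conductor exactly
`p^a` equals `0` if `ν_p(x-1) < a-1`, `⌊p^(a-2)⌋ - p^(a-1)` if `ν_p(x-1) = a-1`, and
`⌊p^(a-2)⌋ - 2p^(a-1) + p^a` if `ν_p(x-1) ≥ a`, where `⌊p^(a-2)⌋` means `p^(a-2)` if
`a ≥ 2` and `0` if `a = 1`. -/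
theorem sum_primitive_chars_eval (p : ℕ) (hp : p.Prime) (a : ℕ) (ha : 1 ≤ a)
    (x : ℤ) (hx : IsCoprime x (p : ℤ)) :
    (∑ χ ∈ Finset.univ.filter
        (fun χ : DirichletCharacter ℂ (p ^ a) => χ.conductor = p ^ a), χ (x : ZMod (p ^ a)))
      =
    if ¬ (p : ℤ) ^ (a - 1) ∣ (x - 1) then 0
    else if ¬ (p : ℤ) ^ a ∣ (x - 1) then
      (if 2 ≤ a then (p : ℂ) ^ (a - 2) else 0) - (p : ℂ) ^ (a - 1)
    else
      (if 2 ≤ a then (p : ℂ) ^ (a - 2) else 0) - 2 * (p : ℂ) ^ (a - 1) + (p : ℂ) ^ a := by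
  haveI : NeZero (p ^ a) := ⟨pow_ne_zero _ hp.pos.ne'⟩
  have hdvd : p ^ (a - 1) ∣ p ^ a := pow_dvd_pow p (Nat.sub_le a 1)
  -- x is a unit mod p^a
  have hxu : IsUnit ((x : ℤ) : ZMod (p ^ a)) := by
    obtain ⟨u, v, huv⟩ := hx.pow_right (n := a)
    refine IsUnit.of_mul_eq_one ((u : ZMod (p ^ a))) ?_
    have : (((u * x + v * p ^ a : ℤ)) : ZMod (p ^ a)) = ((1 : ℤ) : ZMod (p ^ a)) := by
      rw [huv]
    have hz : ((p : ZMod (p ^ a))) ^ a = 0 := by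
      have := ZMod.natCast_self (p ^ a); push_cast at this; exact this
    push_cast at this
    rw [hz, mul_zero, add_zero] at this
    rw [mul_comm]
    exact this
  -- the complement of the primitive characters is the image of changeLevel
  have himg : (Finset.univ.filter
      (fun χ : DirichletCharacter ℂ (p ^ a) => ¬ χ.conductor = p ^ a))
      = Finset.image (changeLevel (R := ℂ) hdvd) Finset.univ := by
    ext χ
    simp only [Finset.mem_filter, Finset.mem_univ, true_and, Finset.mem_image]
    constructor
    · intro hχ
      have hcd : χ.conductor ∣ p ^ a := conductor_dvd_level χ
      obtain ⟨i, hi, hce⟩ := (Nat.dvd_prime_pow hp).mp hcd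
      have hia : i < a := by
        rcases lt_or_eq_of_le hi with h | h
        · exact h
        · exact absurd (by rw [hce, h]) hχ
      have hcd' : χ.conductor ∣ p ^ (a - 1) := hce ▸ pow_dvd_pow p (by omega)
      obtain ⟨h₁, χ₀, hχ₀⟩ := factorsThrough_conductor χ
      refine ⟨changeLevel hcd' χ₀, ?_⟩
      rw [← changeLevel_trans _ hcd' hdvd, ← hχ₀]
    · rintro ⟨χ₀, rfl⟩
      intro hcon
      have hle : (changeLevel hdvd χ₀).conductor ≤ p ^ (a - 1) :=
        Nat.sInf_le (changeLevel_factorsThrough χ₀ hdvd)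
      have : p ^ a ≤ p ^ (a - 1) := hcon ▸ hle
      have hlt : p ^ (a - 1) < p ^ a :=
        Nat.pow_lt_pow_right hp.one_lt (by omega)
      omega
  -- sum over the complement equals sum over characters mod p^(a-1)
  have hcompl : (∑ χ ∈ Finset.univ.filter
      (fun χ : DirichletCharacter ℂ (p ^ a) => ¬ χ.conductor = p ^ a), χ (x : ZMod (p ^ a)))
      = ∑ χ₀ : DirichletCharacter ℂ (p ^ (a - 1)), χ₀ (x : ZMod (p ^ (a - 1))) := by
    rw [himg, Finset.sum_image (fun χ₁ _ χ₂ _ h => changeLevel_injective hdvd h)]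
    refine Finset.sum_congr rfl fun χ₀ _ => ?_
    obtain ⟨u, hu⟩ := hxu
    rw [← hu, changeLevel_eq_cast_of_dvd χ₀ hdvd, hu, ZMod.cast_intCast hdvd]
  -- split the full sum
  have hsplit : (∑ χ : DirichletCharacter ℂ (p ^ a), χ (x : ZMod (p ^ a)))
      = (∑ χ ∈ Finset.univ.filter
          (fun χ : DirichletCharacter ℂ (p ^ a) => χ.conductor = p ^ a), χ (x : ZMod (p ^ a)))
        + (∑ χ ∈ Finset.univ.filter
          (fun χ : DirichletCharacter ℂ (p ^ a) => ¬ χ.conductor = p ^ a),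
            χ (x : ZMod (p ^ a))) :=
    (Finset.sum_filter_add_sum_filter_not _ _ _).symm
  have key : (∑ χ ∈ Finset.univ.filter
      (fun χ : DirichletCharacter ℂ (p ^ a) => χ.conductor = p ^ a), χ (x : ZMod (p ^ a)))
      = (if (p : ℤ) ^ a ∣ (x - 1) then ((p ^ a).totient : ℂ) else 0)
        - (if (p : ℤ) ^ (a - 1) ∣ (x - 1) then ((p ^ (a - 1)).totient : ℂ) else 0) := by
    rw [← sum_chars_aux p hp a x, ← sum_chars_aux p hp (a - 1) x, hsplit, hcompl]
    ring
  rw [key]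
  have himp : (p : ℤ) ^ a ∣ (x - 1) → (p : ℤ) ^ (a - 1) ∣ (x - 1) :=
    fun h => dvd_trans (pow_dvd_pow _ (Nat.sub_le a 1)) h
  by_cases h1 : (p : ℤ) ^ (a - 1) ∣ (x - 1)
  · by_cases h2 : (p : ℤ) ^ a ∣ (x - 1)
    · simp only [h1, h2, if_true, if_pos, not_true, if_false, if_neg (not_not.mpr h2),
        if_neg (not_not.mpr h1)]
      rcases eq_or_lt_of_le ha with h | h
      · -- a = 1
        rw [← h]
        norm_num [Nat.totient_prime hp]
        rw [Nat.cast_sub hp.one_le]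
        push_cast
        ring
      · -- a ≥ 2
        have h2a : 2 ≤ a := h
        obtain ⟨b, rfl⟩ : ∃ b, a = b + 2 := ⟨a - 2, by omega⟩
        rw [if_pos h2a]
        rw [Nat.totient_prime_pow hp (by omega), Nat.totient_prime_pow hp (by omega)]
        push_cast [Nat.cast_sub hp.one_le]
        ring
    · simp only [if_pos h1, if_neg h2, if_neg (not_not.mpr h1), if_pos h2, zero_sub]
      rcases eq_or_lt_of_le ha with h | h
      · rw [← h]
        norm_num
      · have h2a : 2 ≤ a := h
        obtain ⟨b, rfl⟩ : ∃ b, a = b + 2 := ⟨a - 2, by omega⟩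
        rw [if_pos h2a]
        have : b + 2 - 1 = b + 1 := by omega
        rw [this, Nat.totient_prime_pow hp (by omega)]
        have : b + 1 - 1 = b := by omega
        rw [this]
        push_cast [Nat.cast_sub hp.one_lt.le]
        ring
  · have h2 : ¬ (p : ℤ) ^ a ∣ (x - 1) := fun h => h1 (himp h)
    simp [h1, h2]
end

section
/- Let p be an odd prime and let χ₁, χ₂ be twist-minimal Dirichlet characters of levels p^e and p^f respectively with e < f and cond(χ₂) = p^f (χ₂ primitive). Then there is no Dirichlet character ψ such that max(e, ν_p(cond(ψ)) + ν_p(cond(χ₁ψ))) = f and cond(χ₁ψ²) = p^f. (That is, no twist of a twist-minimal form of level p^e with character χ₁ yields a newform of level p^f with primitive character χ₂.) -/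
open DirichletCharacter

private lemma ft_mul {n d : ℕ} {A B : DirichletCharacter ℂ n}
    (hA : A.FactorsThrough d) (hB : B.FactorsThrough d) : (A * B).FactorsThrough d := by
  obtain ⟨hd, A₀, hA₀⟩ := hA
  obtain ⟨hd2, B₀, hB₀⟩ := hB
  refine ⟨hd, A₀ * B₀, ?_⟩
  rw [map_mul, ← hA₀]
  exact congrArg (A * ·) hB₀

private lemma ft_of_dvd {n d d' : ℕ} {χ : DirichletCharacter ℂ n}
    (h : χ.FactorsThrough d) (hdd : d ∣ d') (hd'n : d' ∣ n) : χ.FactorsThrough d' := by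
  obtain ⟨hdn, χ₀, hχ₀⟩ := h
  refine ⟨hd'n, changeLevel hdd χ₀, ?_⟩
  rw [hχ₀, ← changeLevel_trans]

private lemma ft_lift {n m d : ℕ} (hnm : n ∣ m) {ψ : DirichletCharacter ℂ n}
    (h : ψ.FactorsThrough d) : (changeLevel hnm ψ).FactorsThrough d := by
  obtain ⟨hd, ψ₀, hψ₀⟩ := h
  refine ⟨hd.trans hnm, ψ₀, ?_⟩
  rw [hψ₀, ← changeLevel_trans]

private lemma ft_pullback {n m d : ℕ} [NeZero m] (hnm : n ∣ m) (hdn : d ∣ n)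
    {ψ : DirichletCharacter ℂ n} (h : (changeLevel hnm ψ).FactorsThrough d) :
    ψ.FactorsThrough d := by
  obtain ⟨hdm, χ₀, hχ₀⟩ := h
  refine ⟨hdn, χ₀, changeLevel_injective hnm ?_⟩
  rw [← changeLevel_trans]
  exact hχ₀

private lemma cond_pow {p n : ℕ} (hp : p.Prime) (χ : DirichletCharacter ℂ (p ^ n)) :
    χ.conductor = p ^ (χ.conductor.factorization p) := by
  obtain ⟨k, -, hk⟩ := (Nat.dvd_prime_pow hp).mp χ.conductor_dvd_level
  rw [hk]
  simp [hp.factorization_pow]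

private lemma ft_cond_pow {p n : ℕ} (hp : p.Prime) (χ : DirichletCharacter ℂ (p ^ n)) :
    χ.FactorsThrough (p ^ (χ.conductor.factorization p)) := by
  have h := χ.factorsThrough_conductor
  rwa [cond_pow hp χ] at h

private lemma nu_le {p n m : ℕ} (hp : p.Prime) {χ : DirichletCharacter ℂ (p ^ n)}
    (h : χ.FactorsThrough (p ^ m)) : χ.conductor.factorization p ≤ m := by
  have h1 : χ.conductor ≤ p ^ m := Nat.sInf_le ((mem_conductorSet_iff χ).mpr h)
  rw [cond_pow hp χ] at h1
  exact (Nat.pow_le_pow_iff_right hp.one_lt).mp h1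

private lemma nu_cond_lift {p g n : ℕ} (hp : p.Prime) [NeZero (p ^ n)]
    (h : p ^ g ∣ p ^ n) (ψ : DirichletCharacter ℂ (p ^ g)) :
    ψ.conductor.factorization p ≤ (changeLevel h ψ).conductor.factorization p := by
  have hkg : (changeLevel h ψ).conductor.factorization p ≤ g :=
    nu_le hp (changeLevel_factorsThrough ψ h)
  exact nu_le hp (ft_pullback h (pow_dvd_pow p hkg) (ft_cond_pow hp _))

private lemma main_aux {p e f g n : ℕ} (hp : p.Prime) (hef : e < f)
    (hen : p ^ e ∣ p ^ n) (hgn : p ^ g ∣ p ^ n)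
    (χ₁ : DirichletCharacter ℂ (p ^ e)) (ψ : DirichletCharacter ℂ (p ^ g))
    (hmax : max e (ψ.conductor.factorization p +
        ((changeLevel hen χ₁ * changeLevel hgn ψ).conductor.factorization p)) = f)
    (hcond : (changeLevel hen χ₁ * (changeLevel hgn ψ) ^ 2).conductor = p ^ f) : False := by
  haveI : NeZero (p ^ n) := ⟨pow_ne_zero _ hp.pos.ne'⟩
  set X := changeLevel hen χ₁ with hXdef
  set Y := changeLevel hgn ψ with hYdef
  set a := ψ.conductor.factorization p with hadef
  set b := (X * Y).conductor.factorization p with hbdef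
  have hXY2 : X * Y ^ 2 = (X * Y) * Y := by rw [sq, ← mul_assoc]
  rw [hXY2] at hcond
  have hab : a + b = f := by
    rcases le_or_gt (a + b) e with h | h
    · rw [max_eq_left h] at hmax; omega
    · rw [max_eq_right h.le] at hmax; exact hmax
  -- Y factors through p^a
  have hYa : Y.FactorsThrough (p ^ a) := ft_lift hgn (ft_cond_pow hp ψ)
  have hag : a ≤ g := nu_le hp (FactorsThrough.same_level ψ)
  have hgn' : g ≤ n := (Nat.pow_dvd_pow_iff_le_right hp.one_lt).mp hgn
  have hen' : e ≤ n := (Nat.pow_dvd_pow_iff_le_right hp.one_lt).mp hen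
  have hbn : b ≤ n := nu_le hp (FactorsThrough.same_level (X * Y))
  have hXYb : (X * Y).FactorsThrough (p ^ b) := ft_cond_pow hp _
  -- the product (X*Y)*Y factors through p^(max a b)
  have hmn : max a b ≤ n := max_le (hag.trans hgn') hbn
  have hft : ((X * Y) * Y).FactorsThrough (p ^ max a b) :=
    ft_mul (ft_of_dvd hXYb (pow_dvd_pow p (le_max_right a b)) (pow_dvd_pow p hmn))
      (ft_of_dvd hYa (pow_dvd_pow p (le_max_left a b)) (pow_dvd_pow p hmn))
  have hfm : f ≤ max a b := by
    have h2 := nu_le hp hft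
    rw [hcond] at h2
    simpa [hp.factorization_pow] using h2
  have hcases : (a = 0 ∧ b = f) ∨ (a = f ∧ b = 0) := by
    rcases le_total a b with h | h
    · rw [max_eq_right h] at hfm; omega
    · rw [max_eq_left h] at hfm; omega
  rcases hcases with ⟨ha0, hbf⟩ | ⟨haf, hb0⟩
  · -- ψ is trivial, so X*Y = X factors through p^e, contradicting b = f > e
    have hψ1 : ψ = 1 := by
      haveI : NeZero (p ^ g) := ⟨pow_ne_zero g hp.pos.ne'⟩
      rw [eq_one_iff_conductor_eq_one, cond_pow hp ψ, ← hadef, ha0,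
        pow_zero]
    have hY1 : Y = 1 := by rw [hYdef, hψ1, map_one]
    have hXe : (X * Y).FactorsThrough (p ^ e) := by
      rw [hY1, mul_one, hXdef]
      exact changeLevel_factorsThrough χ₁ hen
    have := nu_le hp hXe
    omega
  · -- X*Y trivial, so Y = X⁻¹ factors through p^e, contradicting a = f > e
    have hXY1 : X * Y = 1 := by
      rw [eq_one_iff_conductor_eq_one, cond_pow hp (X * Y), ← hbdef,
        hb0, pow_zero]
    have hYX : Y = X⁻¹ := (inv_eq_of_mul_eq_one_right hXY1).symm
    have hYe : Y.FactorsThrough (p ^ e) := by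
      have : Y = changeLevel hen χ₁⁻¹ := by rw [map_inv, ← hXdef, hYX]
      rw [this]
      exact changeLevel_factorsThrough χ₁⁻¹ hen
    have h1 : (changeLevel hgn ψ).conductor.factorization p ≤ e := nu_le hp (hYdef ▸ hYe)
    have h2 := nu_cond_lift hp hgn ψ
    omega


/-- A Dirichlet character `χ` of level `p^e`, `p` an odd prime, is twist-minimal iff it is
primitive, or trivial, or of order `2^{ν₂(p-1)}`. -/
def IsTwistMinimalOdd {p e : ℕ} (χ : DirichletCharacter ℂ (p ^ e)) : Prop :=
  χ.conductor = p ^ e ∨ χ = 1 ∨ orderOf χ = 2 ^ ((p - 1).factorization 2)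

/-- Let `p` be an odd prime and `χ₁`, `χ₂` twist-minimal Dirichlet
characters of levels `p^e`, `p^f` with `e < f` and `χ₂` primitive (`cond(χ₂) = p^f`).
Then there is no Dirichlet character `ψ` (of any `p`-power level `p^g`) with
`max(e, ν_p(cond(ψ)) + ν_p(cond(χ₁ψ))) = f` and `cond(χ₁ψ²) = p^f`; that is, no twist of
a twist-minimal form of level `p^e`, character `χ₁`, yields a newform of level `p^f` with
primitive character.  (Characters are compared after lifting to the common level
`p^(e+g+f)`.) -/
theorem no_twist_to_primitive (p e f : ℕ) (hp : p.Prime) (hodd : 2 < p) (hef : e < f)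
    (χ₁ : DirichletCharacter ℂ (p ^ e)) (hmin₁ : IsTwistMinimalOdd χ₁)
    (χ₂ : DirichletCharacter ℂ (p ^ f)) (hmin₂ : IsTwistMinimalOdd χ₂)
    (hprim : χ₂.conductor = p ^ f) :
    ∀ (g : ℕ) (ψ : DirichletCharacter ℂ (p ^ g)),
      ¬ (max e (ψ.conductor.factorization p +
            ((DirichletCharacter.changeLevel
                (pow_dvd_pow p (by omega : e ≤ e + g + f)) χ₁ *
              DirichletCharacter.changeLevel
                (pow_dvd_pow p (by omega : g ≤ e + g + f)) ψ).conductor.factorization p))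
          = f ∧
        (DirichletCharacter.changeLevel
            (pow_dvd_pow p (by omega : e ≤ e + g + f)) χ₁ *
          (DirichletCharacter.changeLevel
            (pow_dvd_pow p (by omega : g ≤ e + g + f)) ψ) ^ 2).conductor = p ^ f) := by
  intro g ψ h
  exact main_aux hp hef _ _ χ₁ ψ h.1 h.2
end
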